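/- Let (κ,ρ) ∈ W. The map s : (0,∞) → (0,∞) is a bijection, and its inverse satisfies s^{−1}(x) = 1/s(1/x) for every x ∈ (0,∞). -/

import Mathlib

open Real Filter Set

noncomputable section

/-- `φ₀(κ,ρ,β)`. -/
def phi0 (κ ρ β : ℝ) : ℝ :=
  β * ((1 - κ) * β ^ (2 * ρ) + 2 * (1 + κ * ρ) * β ^ ρ + 1 + κ)
    / ((1 - κ) * β ^ (2 * ρ) + 2 * (1 - κ * ρ) * β ^ ρ + 1 + κ)

/-- `φ₁(κ,ρ,β)`. -/
def phi1 (κ ρ β : ℝ) : ℝ :=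
  β * ((1 + κ) * β ^ (2 * ρ) + 2 * (1 - κ * ρ) * β ^ ρ + 1 - κ)
    / ((1 + κ) * β ^ (2 * ρ) + 2 * (1 + κ * ρ) * β ^ ρ + 1 - κ)

section aux

variable {κ ρ : ℝ}

private lemma rpow_two_mul {β : ℝ} (hβ : 0 < β) (ρ : ℝ) : β ^ (2 * ρ) = (β ^ ρ) ^ 2 := by
  rw [two_mul, Real.rpow_add hβ, sq]

private lemma hp_le_one (hκ0 : 0 < κ) (hκ1 : κ ≤ 1) (hρ : 0 < ρ) (hW : ρ ^ 2 * κ ≤ 1) :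
    κ * ρ ≤ 1 := by
  nlinarith [mul_pos hκ0 hρ, sq_nonneg (κ * ρ - 1), sq_nonneg (κ * ρ + 1)]

private lemma D_pos (hκ0 : 0 < κ) (hκ1 : κ ≤ 1) (hp : κ * ρ ≤ 1) {β : ℝ} (hβ : 0 < β) :
    0 < (1 - κ) * β ^ (2 * ρ) + 2 * (1 - κ * ρ) * β ^ ρ + 1 + κ := by
  have ht : 0 < β ^ ρ := Real.rpow_pos_of_pos hβ ρ
  rw [rpow_two_mul hβ]
  nlinarith [mul_nonneg (sub_nonneg.2 hκ1) (sq_nonneg (β ^ ρ)),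
    mul_nonneg (sub_nonneg.2 hp) ht.le]

private lemma N_pos (hκ0 : 0 < κ) (hκ1 : κ ≤ 1) (hρ : 0 < ρ) {β : ℝ} (hβ : 0 < β) :
    0 < (1 - κ) * β ^ (2 * ρ) + 2 * (1 + κ * ρ) * β ^ ρ + 1 + κ := by
  have ht : 0 < β ^ ρ := Real.rpow_pos_of_pos hβ ρ
  rw [rpow_two_mul hβ]
  nlinarith [mul_nonneg (sub_nonneg.2 hκ1) (sq_nonneg (β ^ ρ)), mul_pos hκ0 hρ]

private lemma le_phi0 (hκ0 : 0 < κ) (hκ1 : κ ≤ 1) (hp : κ * ρ ≤ 1) (hρ : 0 < ρ)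
    {β : ℝ} (hβ : 0 < β) : β ≤ phi0 κ ρ β := by
  have hD := D_pos hκ0 hκ1 hp hβ
  have ht : 0 < β ^ ρ := Real.rpow_pos_of_pos hβ ρ
  rw [phi0, le_div_iff₀ hD]
  nlinarith [mul_pos hβ (mul_pos (mul_pos hκ0 hρ) ht)]

private lemma phi0_pos (hκ0 : 0 < κ) (hκ1 : κ ≤ 1) (hp : κ * ρ ≤ 1) (hρ : 0 < ρ)
    {β : ℝ} (hβ : 0 < β) : 0 < phi0 κ ρ β :=
  lt_of_lt_of_le hβ (le_phi0 hκ0 hκ1 hp hρ hβ)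

private lemma phi0_le (hκ0 : 0 < κ) (hκ1 : κ ≤ 1) (hp : κ * ρ ≤ 1) (hρ : 0 < ρ)
    {β : ℝ} (hβ : 0 < β) (hβ1 : β ≤ 1) : phi0 κ ρ β ≤ 8 * β := by
  have hD := D_pos hκ0 hκ1 hp hβ
  have ht : 0 < β ^ ρ := Real.rpow_pos_of_pos hβ ρ
  have ht1 : β ^ ρ ≤ 1 := Real.rpow_le_one hβ.le hβ1 hρ.le
  rw [phi0, div_le_iff₀ hD, rpow_two_mul hβ]
  rw [rpow_two_mul hβ] at hD
  nlinarith [mul_nonneg (sub_nonneg.2 hκ1) (sq_nonneg (β ^ ρ)), sq_nonneg (β ^ ρ),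
    mul_pos hβ hD, mul_nonneg (mul_nonneg (sub_nonneg.2 hκ1) hβ.le) (sq_nonneg (β ^ ρ)),
    mul_nonneg hβ.le ht.le, mul_pos hκ0 hρ, mul_nonneg (mul_nonneg hβ.le ht.le) (sub_nonneg.2 ht1),
    mul_nonneg (mul_nonneg hβ.le (sq_nonneg (β ^ ρ))) (sub_nonneg.2 hκ1)]

private lemma phi0_hasDerivAt (hκ0 : 0 < κ) (hκ1 : κ ≤ 1) (hp : κ * ρ ≤ 1) (hρ : 0 < ρ)
    {β : ℝ} (hβ : 0 < β) :
    HasDerivAt (phi0 κ ρ)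
      (((1 - κ) ^ 2 * (β ^ ρ) ^ 4 + 4 * (1 - κ) * (1 - κ * ρ ^ 2) * (β ^ ρ) ^ 3
        + (2 * (1 - κ) * (1 + κ) + 4 * (1 - (κ * ρ) ^ 2)) * (β ^ ρ) ^ 2
        + 4 * (1 + κ) * (1 + κ * ρ ^ 2) * (β ^ ρ) + (1 + κ) ^ 2)
        / ((1 - κ) * β ^ (2 * ρ) + 2 * (1 - κ * ρ) * β ^ ρ + 1 + κ) ^ 2) β := by
  have hD := D_pos hκ0 hκ1 hp hβ
  have h2 : HasDerivAt (fun x : ℝ => x ^ (2 * ρ)) ((2 * ρ) * β ^ (2 * ρ - 1)) β :=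
    Real.hasDerivAt_rpow_const (Or.inl hβ.ne')
  have h1 : HasDerivAt (fun x : ℝ => x ^ ρ) (ρ * β ^ (ρ - 1)) β :=
    Real.hasDerivAt_rpow_const (Or.inl hβ.ne')
  have hNum : HasDerivAt (fun x : ℝ => (1 - κ) * x ^ (2 * ρ) + 2 * (1 + κ * ρ) * x ^ ρ + 1 + κ)
      ((1 - κ) * ((2 * ρ) * β ^ (2 * ρ - 1)) + 2 * (1 + κ * ρ) * (ρ * β ^ (ρ - 1))) β := by
    simpa using (((h2.const_mul (1 - κ)).add (h1.const_mul (2 * (1 + κ * ρ)))).add_const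
      (1 : ℝ)).add_const κ
  have hDen : HasDerivAt (fun x : ℝ => (1 - κ) * x ^ (2 * ρ) + 2 * (1 - κ * ρ) * x ^ ρ + 1 + κ)
      ((1 - κ) * ((2 * ρ) * β ^ (2 * ρ - 1)) + 2 * (1 - κ * ρ) * (ρ * β ^ (ρ - 1))) β := by
    simpa using (((h2.const_mul (1 - κ)).add (h1.const_mul (2 * (1 - κ * ρ)))).add_const
      (1 : ℝ)).add_const κ
  have hN := (hasDerivAt_id β).mul hNum
  have hQ := hN.div hDen hD.ne'
  have hEq : phi0 κ ρ = fun x : ℝ =>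
      x * ((1 - κ) * x ^ (2 * ρ) + 2 * (1 + κ * ρ) * x ^ ρ + 1 + κ)
        / ((1 - κ) * x ^ (2 * ρ) + 2 * (1 - κ * ρ) * x ^ ρ + 1 + κ) := rfl
  rw [hEq]
  convert hQ using 1
  · rfl
  · rfl
  · rfl
  have e2 : β ^ (2 * ρ) = (β ^ ρ) ^ 2 := rpow_two_mul hβ ρ
  have e2' : β ^ (2 * ρ - 1) = (β ^ ρ) ^ 2 / β := by
    rw [Real.rpow_sub hβ, e2, Real.rpow_one]
  have e1 : β ^ (ρ - 1) = β ^ ρ / β := by rw [Real.rpow_sub hβ, Real.rpow_one]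
  rw [e2] at hD
  simp only [Pi.mul_apply, id]
  rw [e2, e2', e1]
  field_simp
  ring

private lemma phi0_deriv_pos (hκ0 : 0 < κ) (hκ1 : κ ≤ 1) (hρ : 0 < ρ) (hW : ρ ^ 2 * κ ≤ 1)
    {β : ℝ} (hβ : 0 < β) :
    0 < ((1 - κ) ^ 2 * (β ^ ρ) ^ 4 + 4 * (1 - κ) * (1 - κ * ρ ^ 2) * (β ^ ρ) ^ 3
        + (2 * (1 - κ) * (1 + κ) + 4 * (1 - (κ * ρ) ^ 2)) * (β ^ ρ) ^ 2
        + 4 * (1 + κ) * (1 + κ * ρ ^ 2) * (β ^ ρ) + (1 + κ) ^ 2)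
        / ((1 - κ) * β ^ (2 * ρ) + 2 * (1 - κ * ρ) * β ^ ρ + 1 + κ) ^ 2 := by
  have hp := hp_le_one hκ0 hκ1 hρ hW
  have hD := D_pos hκ0 hκ1 hp hβ
  have ht : 0 < β ^ ρ := Real.rpow_pos_of_pos hβ ρ
  apply div_pos _ (pow_pos hD 2)
  have hW' : κ * ρ ^ 2 ≤ 1 := by nlinarith
  have hpp : 0 ≤ 1 - (κ * ρ) ^ 2 := by nlinarith [mul_pos hκ0 hρ]
  nlinarith [mul_nonneg (mul_nonneg (mul_nonneg (by norm_num : (0:ℝ) ≤ 4)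
      (sub_nonneg.2 hκ1)) (sub_nonneg.2 hW')) (pow_pos ht 3).le,
    mul_nonneg hpp (sq_nonneg (β ^ ρ)),
    mul_nonneg (mul_nonneg (sub_nonneg.2 hκ1) (by linarith : (0:ℝ) ≤ 1 + κ)) (sq_nonneg (β ^ ρ)),
    mul_pos (mul_pos (by linarith : (0:ℝ) < 1 + κ)
      (by nlinarith : (0:ℝ) < 1 + κ * ρ ^ 2)) ht,
    sq_nonneg ((1 - κ) * (β ^ ρ) ^ 2)]

private lemma phi0_strictMono (hκ0 : 0 < κ) (hκ1 : κ ≤ 1) (hρ : 0 < ρ) (hW : ρ ^ 2 * κ ≤ 1) :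
    StrictMonoOn (phi0 κ ρ) (Set.Ioi 0) := by
  have hp := hp_le_one hκ0 hκ1 hρ hW
  apply strictMonoOn_of_deriv_pos (convex_Ioi 0)
  · intro x hx
    exact ((phi0_hasDerivAt hκ0 hκ1 hp hρ hx).differentiableAt.continuousAt).continuousWithinAt
  · intro x hx
    rw [interior_Ioi] at hx
    rw [(phi0_hasDerivAt hκ0 hκ1 hp hρ hx).deriv]
    exact phi0_deriv_pos hκ0 hκ1 hρ hW hx

private lemma phi0_surj (hκ0 : 0 < κ) (hκ1 : κ ≤ 1) (hρ : 0 < ρ) (hW : ρ ^ 2 * κ ≤ 1)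
    {y : ℝ} (hy : 0 < y) : ∃ β, 0 < β ∧ phi0 κ ρ β = y := by
  have hp := hp_le_one hκ0 hκ1 hρ hW
  set b1 : ℝ := min 1 (y / 9) with hb1def
  set b2 : ℝ := max 1 (2 * y) with hb2def
  have hb1 : 0 < b1 := lt_min one_pos (by linarith)
  have hb11 : b1 ≤ 1 := min_le_left _ _
  have hb12 : b1 ≤ b2 := le_trans hb11 (le_max_left _ _)
  have hf1 : phi0 κ ρ b1 ≤ y := by
    have := phi0_le hκ0 hκ1 hp hρ hb1 hb11
    have : phi0 κ ρ b1 ≤ 8 * (y / 9) := le_trans this (by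
      have : b1 ≤ y / 9 := min_le_right _ _
      linarith)
    linarith
  have hf2 : y ≤ phi0 κ ρ b2 := by
    have h2 : (0:ℝ) < b2 := lt_of_lt_of_le hb1 hb12
    have := le_phi0 hκ0 hκ1 hp hρ h2
    have h2y : 2 * y ≤ b2 := le_max_right _ _
    linarith
  have hcont : ContinuousOn (phi0 κ ρ) (Set.Icc b1 b2) := by
    intro x hx
    have hx0 : 0 < x := lt_of_lt_of_le hb1 hx.1
    exact ((phi0_hasDerivAt hκ0 hκ1 hp hρ hx0).differentiableAt.continuousAt).continuousWithinAt
  obtain ⟨β, hβmem, hβeq⟩ := intermediate_value_Icc hb12 hcont ⟨hf1, hf2⟩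
  exact ⟨β, lt_of_lt_of_le hb1 hβmem.1, hβeq⟩

private lemma phi1_eq_inv (hκ0 : 0 < κ) (hκ1 : κ ≤ 1) (hρ : 0 < ρ) (hW : ρ ^ 2 * κ ≤ 1)
    {β : ℝ} (hβ : 0 < β) : phi1 κ ρ β = (phi0 κ ρ β⁻¹)⁻¹ := by
  have hp := hp_le_one hκ0 hκ1 hρ hW
  have hβi : 0 < β⁻¹ := inv_pos.2 hβ
  have ht : 0 < β ^ ρ := Real.rpow_pos_of_pos hβ ρ
  have hD := D_pos hκ0 hκ1 hp hβi
  have hN := N_pos hκ0 hκ1 hρ hβi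
  have e1 : (β⁻¹) ^ ρ = (β ^ ρ)⁻¹ := Real.inv_rpow hβ.le ρ
  have e2 : (β⁻¹) ^ (2 * ρ) = ((β ^ ρ) ^ 2)⁻¹ := by
    rw [Real.inv_rpow hβ.le, rpow_two_mul hβ]
  have hDen1 : 0 < (1 + κ) * (β ^ ρ) ^ 2 + 2 * (1 + κ * ρ) * β ^ ρ + 1 - κ := by
    nlinarith [mul_pos (mul_pos hκ0 hρ) ht, mul_pos hκ0 (pow_pos ht 2)]
  rw [e2, e1] at hD hN
  rw [phi1, phi0, e1, e2, rpow_two_mul hβ]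
  have hβne := hβ.ne'
  have htne := ht.ne'
  field_simp
  have h3 : (0:ℝ) < (1 - κ) * β ^ ρ + 2 * (1 + κ * ρ) * (β ^ ρ) ^ 2 + (β ^ ρ) ^ 2 * β ^ ρ
      + κ * ((β ^ ρ) ^ 2 * β ^ ρ) := by
    nlinarith [mul_nonneg (sub_nonneg.2 hκ1) ht.le, mul_pos (mul_pos hκ0 hρ) (pow_pos ht 2),
      pow_pos ht 2, mul_pos (pow_pos ht 2) ht, mul_pos hκ0 (mul_pos (pow_pos ht 2) ht)]
  rw [div_eq_div_iff (by nlinarith [mul_pos (mul_pos hκ0 hρ) ht, mul_pos hκ0 (pow_pos ht 2)]) (by nlinarith [mul_pos (mul_pos hκ0 hρ) ht, mul_pos hκ0 (pow_pos ht 2)])]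
  ring

end aux

theorem stmt14 (κ ρ : ℝ) (hκ : κ ∈ Set.Ioc (0:ℝ) 1) (hρ : 0 < ρ) (hW : ρ ^ 2 * κ ≤ 1)
    (s : ℝ → ℝ) (hs : ∀ β : ℝ, 0 < β → s (phi0 κ ρ β) = phi1 κ ρ β) :
    Set.BijOn s (Set.Ioi 0) (Set.Ioi 0) ∧
    -- the inverse of `s` satisfies `s⁻¹(x) = 1/s(1/x)`:
    ∀ x : ℝ, 0 < x → s (s x⁻¹)⁻¹ = x := by
  obtain ⟨hκ0, hκ1⟩ := hκ
  have hp := hp_le_one hκ0 hκ1 hρ hW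
  have key : ∀ β : ℝ, 0 < β → s (phi0 κ ρ β) = (phi0 κ ρ β⁻¹)⁻¹ := fun β hβ =>
    (hs β hβ).trans (phi1_eq_inv hκ0 hκ1 hρ hW hβ)
  have pos : ∀ β : ℝ, 0 < β → 0 < phi0 κ ρ β := fun β hβ => phi0_pos hκ0 hκ1 hp hρ hβ
  have inj := (phi0_strictMono hκ0 hκ1 hρ hW).injOn
  constructor
  · refine ⟨?_, ?_, ?_⟩
    · intro x hx
      obtain ⟨β, hβ, rfl⟩ := phi0_surj hκ0 hκ1 hρ hW hx
      rw [key β hβ]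
      exact Set.mem_Ioi.2 (inv_pos.2 (pos _ (inv_pos.2 hβ)))
    · intro x hx y hy hxy
      obtain ⟨β, hβ, rfl⟩ := phi0_surj hκ0 hκ1 hρ hW hx
      obtain ⟨γ, hγ, rfl⟩ := phi0_surj hκ0 hκ1 hρ hW hy
      rw [key β hβ, key γ hγ] at hxy
      have h1 : phi0 κ ρ β⁻¹ = phi0 κ ρ γ⁻¹ := by
        have := inv_injective hxy
        exact this
      have h2 : β⁻¹ = γ⁻¹ := inj (Set.mem_Ioi.2 (inv_pos.2 hβ)) (Set.mem_Ioi.2 (inv_pos.2 hγ)) h1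
      rw [inv_injective h2]
    · intro y hy
      obtain ⟨γ, hγ, hγy⟩ := phi0_surj hκ0 hκ1 hρ hW (inv_pos.2 (Set.mem_Ioi.1 hy))
      refine ⟨phi0 κ ρ γ⁻¹, Set.mem_Ioi.2 (pos _ (inv_pos.2 hγ)), ?_⟩
      rw [key γ⁻¹ (inv_pos.2 hγ), inv_inv, hγy, inv_inv]
  · intro x hx
    obtain ⟨γ, hγ, hγx⟩ := phi0_surj hκ0 hκ1 hρ hW (inv_pos.2 hx)
    rw [← hγx, key γ hγ, inv_inv, key γ⁻¹ (inv_pos.2 hγ), inv_inv, hγx, inv_inv]
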